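/- Let b ∈ ℕ and let a_1,…,a_n ∈ ℕ ∪ {0} satisfy ∑_{k=1}^n a_k = b. Then there exist pairwise orthogonal projections P_1,…,P_n ∈ M_b(ℂ) with ∑ P_k = I_b such that every diagonal entry of P_k equals a_k/b. -/

import Mathlib

open Matrix Finset

/-- Exact carpenter lemma for rational data: if `∑ a k = b`, there exist
pairwise orthogonal projections `P k ∈ M_b(ℂ)` summing to the identity with
every diagonal entry of `P k` equal to `a k / b`. -/
theorem matrix_exact_constant_diagonal (n b : ℕ) (hb : 0 < b)
    (a : Fin n → ℕ) (ha : ∑ k, a k = b) :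
    ∃ P : Fin n → Matrix (Fin b) (Fin b) ℂ,
      (∀ k, (P k)ᴴ = P k ∧ P k * P k = P k) ∧
      (∀ j k, j ≠ k → P j * P k = 0) ∧
      (∑ k, P k = 1) ∧
      (∀ k, ∀ i : Fin b, P k i i = (a k : ℂ) / (b : ℂ)) := by
  classical
  -- the block assignment function
  have hcardSig : Fintype.card ((k : Fin n) × Fin (a k)) = b := by
    simp [Fintype.card_sigma, ha]
  obtain ⟨e⟩ : Nonempty (((k : Fin n) × Fin (a k)) ≃ Fin b) :=
    ⟨Fintype.equivFinOfCardEq hcardSig⟩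
  set f : Fin b → Fin n := fun i => (e.symm i).1 with hf
  have hcard : ∀ k, (univ.filter (fun j : Fin b => f j = k)).card = a k := by
    intro k
    rw [← Fintype.card_subtype, ← Fintype.card_fin (a k)]
    refine Fintype.card_congr ?_
    refine (Equiv.subtypeEquiv (p := fun j => f j = k) (q := fun σ : (k' : Fin n) × Fin (a k') => σ.1 = k) e.symm (fun j => Iff.rfl)).trans ?_
    refine (Equiv.ofBijective (fun x : Fin (a k) => (⟨⟨k, x⟩, rfl⟩ :
      {σ : (k' : Fin n) × Fin (a k') // σ.1 = k})) ⟨?_, ?_⟩).symm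
    · intro x y hxy
      have h2 := congrArg Subtype.val hxy
      rw [Sigma.mk.inj_iff] at h2
      exact eq_of_heq h2.2
    · rintro ⟨⟨k', x⟩, hk'⟩
      dsimp at hk'; subst hk'
      exact ⟨x, rfl⟩
  -- the DFT setup
  set ζ : ℂ := Complex.exp (2 * Real.pi * Complex.I / b) with hζdef
  have hζ : IsPrimitiveRoot ζ b := Complex.isPrimitiveRoot_exp b hb.ne'
  have habs : ‖ζ‖ = 1 := hζ.norm'_eq_one hb.ne'
  have hζ0 : ζ ≠ 0 := fun h => by simp [h] at habs
  have hmul : ∀ p q : ℤ, ζ ^ p * ζ ^ q = ζ ^ (p + q) := fun p q =>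
    (zpow_add₀ hζ0 p q).symm
  have hconj : ∀ p : ℤ, star (ζ ^ p) = ζ ^ (-p) := by
    intro p
    have habs' : ‖ζ ^ p‖ = 1 := by
      rw [norm_zpow, habs, _root_.one_zpow]
    rw [Complex.star_def, ← Complex.inv_eq_conj habs', _root_.zpow_neg]
  have key : ∀ m : ℤ, ∑ j : Fin b, ζ ^ ((j : ℤ) * m) = if (b : ℤ) ∣ m then (b : ℂ) else 0 := by
    intro m
    have h1 : ∀ j : Fin b, ζ ^ ((j : ℤ) * m) = (ζ ^ m) ^ (j : ℕ) := fun j => by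
      rw [mul_comm, _root_.zpow_mul, zpow_natCast]
    simp_rw [h1]
    rw [Fin.sum_univ_eq_sum_range (fun t => (ζ ^ m) ^ t)]
    have hwb : (ζ ^ m) ^ b = 1 := by
      rw [← zpow_natCast (ζ ^ m), ← _root_.zpow_mul, mul_comm, _root_.zpow_mul, zpow_natCast,
        hζ.pow_eq_one, _root_.one_zpow]
    by_cases hd : (b : ℤ) ∣ m
    · have hw1 : ζ ^ m = 1 := (hζ.zpow_eq_one_iff_dvd m).mpr hd
      simp [hd, hw1]
    · have hw1 : ζ ^ m ≠ 1 := fun h => hd ((hζ.zpow_eq_one_iff_dvd m).mp h)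
      rw [if_neg hd]
      have h2 := geom_sum_mul (ζ ^ m) b
      rw [hwb, sub_self] at h2
      exact (mul_eq_zero.mp h2).resolve_right (sub_ne_zero.mpr hw1)
  have hdvd : ∀ i i' : Fin b, ((b : ℤ) ∣ (i' : ℤ) - (i : ℤ)) ↔ i = i' := by
    intro i i'
    constructor
    · intro h
      have h1 : ((i' : ℤ) - (i : ℤ)) = 0 := by
        refine Int.eq_zero_of_abs_lt_dvd h ?_
        have hi : (i : ℤ) < b := by exact_mod_cast i.isLt
        have hi' : (i' : ℤ) < b := by exact_mod_cast i'.isLt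
        have hi0 : (0 : ℤ) ≤ i := Int.natCast_nonneg _
        have hi'0 : (0 : ℤ) ≤ i' := Int.natCast_nonneg _
        rw [abs_sub_lt_iff]; omega
      have : (i' : ℤ) = (i : ℤ) := by omega
      exact (Fin.ext (by exact_mod_cast this)).symm
    · rintro rfl; simp
  have hb0 : (b : ℂ) ≠ 0 := Nat.cast_ne_zero.mpr hb.ne'
  -- matrices
  set V : Matrix (Fin b) (Fin b) ℂ := Matrix.of fun j i => ζ ^ ((j : ℤ) * (i : ℤ)) with hV
  have hVhV : Vᴴ * V = (b : ℂ) • 1 := by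
    ext i i'
    rw [mul_apply]
    have hterm : ∀ j : Fin b, Vᴴ i j * V j i' = ζ ^ ((j : ℤ) * ((i' : ℤ) - (i : ℤ))) := by
      intro j
      rw [conjTranspose_apply, hV]
      simp only [of_apply]
      rw [hconj, hmul]
      congr 1; ring
    simp_rw [hterm]
    rw [key]
    by_cases h : i = i'
    · subst h
      rw [if_pos ((hdvd i i).mpr rfl)]
      simp [Matrix.one_apply]
    · rw [if_neg (fun hc => h ((hdvd i i').mp hc))]
      simp [Matrix.one_apply, h]
  have hVVh : V * Vᴴ = (b : ℂ) • 1 := by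
    have h1 : ((b : ℂ)⁻¹ • Vᴴ) * V = 1 := by
      rw [Matrix.smul_mul, hVhV, smul_smul, inv_mul_cancel₀ hb0, one_smul]
    have h2 : V * ((b : ℂ)⁻¹ • Vᴴ) = 1 := mul_eq_one_comm.mpr h1
    calc V * Vᴴ = (b : ℂ) • (V * ((b : ℂ)⁻¹ • Vᴴ)) := by
          rw [Matrix.mul_smul, smul_smul, mul_inv_cancel₀ hb0, one_smul]
      _ = (b : ℂ) • 1 := by rw [h2]
  set Q : Fin n → Matrix (Fin b) (Fin b) ℂ :=
    fun k => Matrix.diagonal (fun j => if f j = k then 1 else 0) with hQ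
  have hQmul : ∀ k l, Q k * Q l = if k = l then Q k else 0 := by
    intro k l
    rw [hQ]
    dsimp only
    rw [diagonal_mul_diagonal]
    by_cases hkl : k = l
    · subst hkl
      rw [if_pos rfl]
      have : (fun j => (if f j = k then (1:ℂ) else 0) * (if f j = k then 1 else 0))
          = fun j => if f j = k then (1:ℂ) else 0 := by
        funext j; by_cases h : f j = k <;> simp [h]
      rw [this]
    · rw [if_neg hkl]
      have : (fun j => (if f j = k then (1:ℂ) else 0) * (if f j = l then 1 else 0))
          = fun _ => (0:ℂ) := by
        funext j
        by_cases h : f j = k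
        · have h' : f j ≠ l := by rw [h]; exact hkl
          simp [h, h', hkl]
        · simp [h]
      rw [this, diagonal_zero]
  set P : Fin n → Matrix (Fin b) (Fin b) ℂ :=
    fun k => (b : ℂ)⁻¹ • (Vᴴ * Q k * V) with hP
  have hPmul : ∀ k l, P k * P l = (b : ℂ)⁻¹ • (Vᴴ * (Q k * Q l) * V) := by
    intro k l
    rw [hP]
    dsimp only
    rw [Matrix.smul_mul, Matrix.mul_smul, smul_smul]
    have hbig : Vᴴ * Q k * V * (Vᴴ * Q l * V) = (b : ℂ) • (Vᴴ * (Q k * Q l) * V) := by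
      calc Vᴴ * Q k * V * (Vᴴ * Q l * V)
          = Vᴴ * Q k * (V * Vᴴ) * (Q l * V) := by noncomm_ring
        _ = Vᴴ * Q k * ((b : ℂ) • 1) * (Q l * V) := by rw [hVVh]
        _ = (b : ℂ) • (Vᴴ * (Q k * Q l) * V) := by
            rw [Matrix.mul_smul, Matrix.smul_mul, Matrix.mul_one]
            congr 1; noncomm_ring
    rw [hbig, smul_smul]
    congr 1
    field_simp
  refine ⟨P, fun k => ⟨?_, ?_⟩, fun k l hkl => ?_, ?_, fun k i => ?_⟩
  · -- hermitian
    rw [hP]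
    dsimp only
    rw [conjTranspose_smul, conjTranspose_mul, conjTranspose_mul, conjTranspose_conjTranspose]
    have hQH : (Q k)ᴴ = Q k := by
      rw [hQ]
      dsimp only
      rw [diagonal_conjTranspose]
      refine congrArg Matrix.diagonal ?_
      funext j
      by_cases h : f j = k <;> simp [h, Pi.star_apply]
    rw [hQH]
    congr 1
    · simp
    · noncomm_ring
  · -- idempotent
    rw [hPmul, hQmul, if_pos rfl, hP]
  · -- orthogonal
    rw [hPmul, hQmul, if_neg hkl]
    simp
  · -- sum to identity
    have hQsum : ∑ k, Q k = 1 := by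
      ext j j'
      rw [Matrix.sum_apply]
      by_cases h : j = j'
      · subst h
        simp [hQ, Matrix.diagonal_apply_eq, Matrix.one_apply, Finset.sum_ite_eq]
      · simp [hQ, Matrix.diagonal_apply_ne _ h, Matrix.one_apply, h]
    calc ∑ k, P k = (b : ℂ)⁻¹ • (Vᴴ * (∑ k, Q k) * V) := by
          rw [hP]
          dsimp only
          rw [← Finset.smul_sum, ← Finset.sum_mul, ← Finset.mul_sum]
      _ = 1 := by
          rw [hQsum, Matrix.mul_one, hVhV, smul_smul, inv_mul_cancel₀ hb0, one_smul]
  · -- diagonal entries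
    rw [hP]
    dsimp only
    rw [Matrix.smul_apply, Matrix.mul_apply]
    have hterm : ∀ j : Fin b, (Vᴴ * Q k) i j * V j i = if f j = k then (1:ℂ) else 0 := by
      intro j
      rw [hQ]
      dsimp only
      rw [Matrix.mul_diagonal, conjTranspose_apply]
      by_cases h : f j = k
      · rw [if_pos h, mul_one, hV]
        simp only [of_apply]
        rw [hconj, hmul]
        simp
      · rw [if_neg h, mul_zero, zero_mul]
    simp_rw [hterm]
    rw [Finset.sum_boole, hcard k, smul_eq_mul]
    field_simp
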